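/- Let ψ : ℝⁿ ⇉ ℝⁿ satisfy the (Γ₁)-condition and V : ℝⁿ → ℝⁿ be L-Lipschitz continuous and η-strongly monotone. Let μ > 0 and ρ > 0 satisfy ‖P_{ψ(r)}(y) − P_{ψ(s)}(y)‖ ≤ ρ‖r − s‖ for all y, r, s ∈ ℝⁿ, and assume θ := η − ρ − 1/2 − L²/2 − μ²/2 + μη > 0. Let x* be a solution of the inverse quasi-variational inequality problem. Then for all w ∈ ℝⁿ, θ₁ ‖V(w) − P_{ψ(w)}(V(w) − μw)‖² ≤ ⟨V(w) − P_{ψ(w)}(V(w) − μw), w − x*⟩, where θ₁ := θ / (2L + ρ + μ)². -/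
import Mathlib


open scoped RealInnerProductSpace
open MeasureTheory

/- Metric projection onto a set `C ⊆ ℝⁿ`: when `C` is nonempty, closed and convex this is
the unique nearest point of `C`. -/
open Classical in
noncomputable def metricProj {d : ℕ} (C : Set (EuclideanSpace ℝ (Fin d)))
    (x : EuclideanSpace ℝ (Fin d)) : EuclideanSpace ℝ (Fin d) :=
  if h : ∃ y, y ∈ C ∧ ∀ z ∈ C, ‖x - y‖ ≤ ‖x - z‖ then h.choose else x

lemma metricProj_spec {d : ℕ} {C : Set (EuclideanSpace ℝ (Fin d))}
    (hne : C.Nonempty) (hcl : IsClosed C) (hco : Convex ℝ C)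
    (x : EuclideanSpace ℝ (Fin d)) :
    metricProj C x ∈ C ∧ ∀ z ∈ C, ‖x - metricProj C x‖ ≤ ‖x - z‖ := by
  have h : ∃ y, y ∈ C ∧ ∀ z ∈ C, ‖x - y‖ ≤ ‖x - z‖ := by
    obtain ⟨v, hv, hveq⟩ := exists_norm_eq_iInf_of_complete_convex hne hcl.isComplete hco x
    refine ⟨v, hv, fun z hz => ?_⟩
    rw [hveq]
    exact ciInf_le ⟨0, by rintro b ⟨u, rfl⟩; exact norm_nonneg _⟩ (⟨z, hz⟩ : C)
  rw [metricProj, dif_pos h]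
  exact h.choose_spec

lemma metricProj_inner_le {d : ℕ} {C : Set (EuclideanSpace ℝ (Fin d))}
    (hne : C.Nonempty) (hcl : IsClosed C) (hco : Convex ℝ C)
    (x : EuclideanSpace ℝ (Fin d)) :
    ∀ c ∈ C, ⟪x - metricProj C x, c - metricProj C x⟫ ≤ 0 := by
  obtain ⟨hmem, hmin⟩ := metricProj_spec hne hcl hco x
  haveI : Nonempty C := hne.to_subtype
  have heq : ‖x - metricProj C x‖ = ⨅ w : C, ‖x - w‖ := by
    apply le_antisymm
    · exact le_ciInf fun z => hmin z z.2
    · exact ciInf_le ⟨0, by rintro b ⟨u, rfl⟩; exact norm_nonneg _⟩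
        (⟨metricProj C x, hmem⟩ : C)
  exact (norm_eq_iInf_iff_real_inner_le_zero hco hmem).mp heq

lemma metricProj_eq_of {d : ℕ} {C : Set (EuclideanSpace ℝ (Fin d))}
    (hne : C.Nonempty) (hcl : IsClosed C) (hco : Convex ℝ C)
    {x v : EuclideanSpace ℝ (Fin d)} (hv : v ∈ C)
    (h : ∀ c ∈ C, ⟪x - v, c - v⟫ ≤ 0) : metricProj C x = v := by
  set P := metricProj C x with hP
  have hPmem : P ∈ C := (metricProj_spec hne hcl hco x).1
  have h1 : ⟪x - P, v - P⟫ ≤ 0 := metricProj_inner_le hne hcl hco x v hv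
  have h2 : ⟪x - v, P - v⟫ ≤ 0 := h P hPmem
  have key : ⟪v - P, v - P⟫ ≤ 0 := by
    have e : (v : EuclideanSpace ℝ (Fin d)) - P = (x - P) - (x - v) := by abel
    calc ⟪v - P, v - P⟫ = ⟪x - P, v - P⟫ - ⟪x - v, v - P⟫ := by rw [e, inner_sub_left]
    _ = ⟪x - P, v - P⟫ + ⟪x - v, P - v⟫ := by
        rw [show (P : EuclideanSpace ℝ (Fin d)) - v = -(v - P) by abel, inner_neg_right]; ring
    _ ≤ 0 := by linarith
  have : v - P = 0 := by
    have := real_inner_self_nonneg (x := v - P)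
    have h0 : ⟪v - P, v - P⟫ = 0 := le_antisymm key this
    exact inner_self_eq_zero.mp h0
  have : v = P := by rwa [sub_eq_zero] at this
  exact this.symm


set_option maxHeartbeats 1000000 in
/-- If `θ := η − ρ − 1/2 − L²/2 − μ²/2 + μη > 0` and `x*` solves the IQVIP, then
`θ₁ ‖V w − P_{ψ w}(V w − μ w)‖² ≤ ⟨V w − P_{ψ w}(V w − μ w), w − x*⟩` for all `w`, where
`θ₁ = θ/(2L + ρ + μ)²`. -/
theorem stmt_6 {d : ℕ} (ψ : EuclideanSpace ℝ (Fin d) → Set (EuclideanSpace ℝ (Fin d)))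
    (V : EuclideanSpace ℝ (Fin d) → EuclideanSpace ℝ (Fin d)) (L η μ ρ θ θ₁ : ℝ)
    (hΓ₁ : ∀ x, (ψ x).Nonempty ∧ IsClosed (ψ x) ∧ Convex ℝ (ψ x))
    (hL : ∀ y z, ‖V y - V z‖ ≤ L * ‖y - z‖)
    (hη : ∀ y z, η * ‖y - z‖ ^ 2 ≤ ⟪V y - V z, y - z⟫)
    (hμ : 0 < μ) (hρ : 0 < ρ)
    (hproj : ∀ y r s, ‖metricProj (ψ r) y - metricProj (ψ s) y‖ ≤ ρ * ‖r - s‖)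
    (hθ : θ = η - ρ - 1/2 - L^2/2 - μ^2/2 + μ*η) (hθpos : 0 < θ)
    (hθ₁ : θ₁ = θ / (2*L + ρ + μ)^2)
    (xs : EuclideanSpace ℝ (Fin d))
    (hxs : V xs ∈ ψ xs ∧ ∀ z ∈ ψ xs, 0 ≤ ⟪xs, z - V xs⟫) :
    ∀ w : EuclideanSpace ℝ (Fin d),
      θ₁ * ‖V w - metricProj (ψ w) (V w - μ • w)‖ ^ 2 ≤
        ⟪V w - metricProj (ψ w) (V w - μ • w), w - xs⟫ := by
  intro w
  obtain ⟨hne_w, hcl_w, hco_w⟩ := hΓ₁ w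
  obtain ⟨hne_s, hcl_s, hco_s⟩ := hΓ₁ xs
  set u : EuclideanSpace ℝ (Fin d) := V w - μ • w with hu
  set us : EuclideanSpace ℝ (Fin d) := V xs - μ • xs with hus
  set z : EuclideanSpace ℝ (Fin d) := metricProj (ψ w) u with hz
  set z' : EuclideanSpace ℝ (Fin d) := metricProj (ψ w) us with hz'
  set D : EuclideanSpace ℝ (Fin d) := w - xs with hD
  set n : ℝ := ‖D‖ with hn
  have hn0 : 0 ≤ n := norm_nonneg _
  -- Step A : V xs is the projection of us onto ψ xs
  have hA : metricProj (ψ xs) us = V xs := by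
    apply metricProj_eq_of hne_s hcl_s hco_s hxs.1
    intro c hc
    have e : us - V xs = -(μ • xs) := by rw [hus]; abel
    rw [e, inner_neg_left, real_inner_smul_left]
    have := hxs.2 c hc
    nlinarith
  have hzmem : z ∈ ψ w := (metricProj_spec hne_w hcl_w hco_w u).1
  have hz'mem : z' ∈ ψ w := (metricProj_spec hne_w hcl_w hco_w us).1
  -- Step B : ‖z - z'‖ ≤ ‖u - us‖
  have h1 : ⟪u - z, z' - z⟫ ≤ 0 := metricProj_inner_le hne_w hcl_w hco_w u z' hz'mem
  have h2 : ⟪us - z', z - z'⟫ ≤ 0 := metricProj_inner_le hne_w hcl_w hco_w us z hzmem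
  have hBkey : ‖z - z'‖ ^ 2 ≤ ⟪u - us, z - z'⟫ := by
    have e1 : u - us = (u - z) + (-(us - z')) + (z - z') := by abel
    have e2 : ⟪u - us, z - z'⟫
        = ⟪u - z, z - z'⟫ + ⟪-(us - z'), z - z'⟫ + ⟪z - z', z - z'⟫ := by
      rw [e1, inner_add_left, inner_add_left]
    have e3 : ⟪u - z, z - z'⟫ = -⟪u - z, z' - z⟫ := by
      rw [show (z : EuclideanSpace ℝ (Fin d)) - z' = -(z' - z) by abel, inner_neg_right]
    have e4 : ⟪-(us - z'), z - z'⟫ = -⟪us - z', z - z'⟫ := inner_neg_left _ _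
    have e5 : ⟪z - z', z - z'⟫ = ‖z - z'‖ ^ 2 := real_inner_self_eq_norm_sq _
    rw [e2, e3, e4, e5]; linarith
  have hB : ‖z - z'‖ ≤ ‖u - us‖ := by
    have cs := real_inner_le_norm (u - us) (z - z')
    nlinarith [norm_nonneg (z - z'), norm_nonneg (u - us)]
  -- Step C : ‖V xs - z'‖ ≤ ρ * n
  have hC : ‖V xs - z'‖ ≤ ρ * n := by
    have := hproj us xs w
    rw [hA, ← hz'] at this
    calc ‖V xs - z'‖ ≤ ρ * ‖xs - w‖ := this
    _ = ρ * n := by rw [hn, hD, norm_sub_rev]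
  -- Step D : ‖u - us‖^2 ≤ (L^2 - 2*μ*η + μ^2) * n^2
  have hLip : ‖V w - V xs‖ ≤ L * n := by
    have := hL w xs
    rw [← hD, ← hn] at this
    exact this
  have hmono : η * n ^ 2 ≤ ⟪V w - V xs, D⟫ := by
    have := hη w xs
    rw [← hD] at this
    rwa [← hn] at this
  have hDbound : ‖u - us‖ ^ 2 ≤ (L ^ 2 - 2 * μ * η + μ ^ 2) * n ^ 2 := by
    have e : u - us = (V w - V xs) - μ • D := by rw [hu, hus, hD]; module
    have expand : ‖u - us‖ ^ 2
        = ‖V w - V xs‖ ^ 2 - 2 * ⟪V w - V xs, μ • D⟫ + ‖μ • D‖ ^ 2 := by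
      rw [e]; exact norm_sub_sq_real _ _
    have hsm : ⟪V w - V xs, μ • D⟫ = μ * ⟪V w - V xs, D⟫ := real_inner_smul_right _ _ _
    have hns : ‖μ • D‖ = μ * n := by
      rw [norm_smul, Real.norm_eq_abs, abs_of_pos hμ, hn]
    have hLsq : ‖V w - V xs‖ ^ 2 ≤ (L * n) ^ 2 :=
      pow_le_pow_left₀ (norm_nonneg _) hLip 2
    rw [hsm, hns] at expand
    nlinarith [mul_le_mul_of_nonneg_left hmono (le_of_lt hμ)]
  -- Step E : θ * n^2 ≤ ⟪V w - z, D⟫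
  have hdecomp : ⟪V w - z, D⟫
      = ⟪V w - V xs, D⟫ + ⟪V xs - z', D⟫ + ⟪z' - z, D⟫ := by
    rw [show (V w : EuclideanSpace ℝ (Fin d)) - z
        = ((V w - V xs) + (V xs - z')) + (z' - z) by abel,
      inner_add_left, inner_add_left]
  have habs1 := abs_real_inner_le_norm (V xs - z') D
  have habs2 := abs_real_inner_le_norm (z' - z) D
  have hE : θ * n ^ 2 ≤ ⟪V w - z, D⟫ := by
    have b1 : -(ρ * n ^ 2) ≤ ⟪V xs - z', D⟫ := by
      have h' : ‖V xs - z'‖ * n ≤ ρ * n * n := mul_le_mul_of_nonneg_right hC hn0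
      have := (abs_le.mp habs1).1
      nlinarith
    have b2 : -(1/2 * ‖z - z'‖ ^ 2 + 1/2 * n ^ 2) ≤ ⟪z' - z, D⟫ := by
      have h' : ‖z' - z‖ = ‖z - z'‖ := norm_sub_rev _ _
      have := (abs_le.mp habs2).1
      nlinarith [sq_nonneg (‖z - z'‖ - n)]
    rw [hdecomp, hθ]
    nlinarith [pow_le_pow_left₀ (norm_nonneg (z - z')) hB 2, hDbound, hmono, b1, b2]
  -- Step F : ‖V w - z‖ ≤ (2L + ρ + μ) * n
  have hF : ‖V w - z‖ ≤ (2 * L + ρ + μ) * n := by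
    have t1 : ‖V w - z‖ ≤ ‖V w - V xs‖ + ‖V xs - z'‖ + ‖z' - z‖ := by
      calc ‖V w - z‖ = ‖((V w - V xs) + (V xs - z')) + (z' - z)‖ := by
            congr 1; abel
      _ ≤ ‖(V w - V xs) + (V xs - z')‖ + ‖z' - z‖ := norm_add_le _ _
      _ ≤ ‖V w - V xs‖ + ‖V xs - z'‖ + ‖z' - z‖ := by
            have := norm_add_le (V w - V xs) (V xs - z'); linarith
    have t2 : ‖z' - z‖ ≤ L * n + μ * n := by
      have e : u - us = (V w - V xs) - μ • D := by rw [hu, hus, hD]; module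
      have : ‖u - us‖ ≤ ‖V w - V xs‖ + ‖μ • D‖ := by
        rw [e]; exact norm_sub_le _ _
      have hns : ‖μ • D‖ = μ * n := by
        rw [norm_smul, Real.norm_eq_abs, abs_of_pos hμ, hn]
      have h' : ‖z' - z‖ = ‖z - z'‖ := norm_sub_rev _ _
      rw [h']
      linarith [hB]
    linarith
  -- conclusion
  rcases eq_or_lt_of_le (norm_nonneg (V w - z)) with h0 | h0
  · have hR0 : V w - z = 0 := by rw [← norm_eq_zero]; exact h0.symm
    rw [hR0]
    simp
  · have hKn : 0 < (2 * L + ρ + μ) * n := lt_of_lt_of_le h0 hF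
    have hnpos : 0 < n := by
      rcases lt_or_eq_of_le hn0 with h | h
      · exact h
      · exfalso; rw [← h] at hKn; simp at hKn
    have hK : 0 < 2 * L + ρ + μ := by nlinarith
    have hK2 : (0:ℝ) < (2 * L + ρ + μ) ^ 2 := by positivity
    have hθ₁pos : 0 < θ₁ := by rw [hθ₁]; exact div_pos hθpos hK2
    have hkey : θ₁ * (2 * L + ρ + μ) ^ 2 = θ := by
      rw [hθ₁]; field_simp
    have hRsq : ‖V w - z‖ ^ 2 ≤ ((2 * L + ρ + μ) * n) ^ 2 :=
      pow_le_pow_left₀ (norm_nonneg _) hF 2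
    calc θ₁ * ‖V w - z‖ ^ 2 ≤ θ₁ * (((2 * L + ρ + μ) * n) ^ 2) :=
          mul_le_mul_of_nonneg_left hRsq hθ₁pos.le
    _ = θ * n ^ 2 := by rw [mul_pow, ← mul_assoc, hkey]
    _ ≤ ⟪V w - z, D⟫ := hE
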